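/- In the setup described in the context (DAG G, identifying set S for the s-t-paths, arborescence T rooted at s, S' := E \ T, topological ordering ψ, and the maps v_s and v_t), the following holds for every arc e ∈ S' \ S: (1) ψ(v_s(e)) ≤ ψ(v_t(e)), and (2) there is no v_s(e)-v_t(e)-path using only arcs of T \ S. -/

import Mathlib

/-- The list of consecutive arcs of a list of vertices. -/
def arcsOf {V : Type*} (l : List V) : List (V × V) := l.zip l.tail

/-- `l` is (the vertex list of) a simple directed path from `u` to `v`
using only arcs from `A`. -/
def IsPathOn {V : Type*} (A : Set (V × V)) (u v : V) (l : List V) : Prop :=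
  l.Nodup ∧ l.head? = some u ∧ l.getLast? = some v ∧ ∀ p ∈ arcsOf l, p ∈ A

/-- The incidence vector of (the arc set of) a path given by vertex list `l`. -/
def pathVec {V : Type*} [DecidableEq V] (l : List V) : (V × V) → ℝ :=
  fun p => if p ∈ arcsOf l then 1 else 0

/-- `X^path`: the set of incidence vectors of simple `s`-`t`-paths in the digraph
with arc set `A`. -/
def XPath {V : Type*} [DecidableEq V] (A : Set (V × V)) (s t : V) :
    Set ((V × V) → ℝ) :=
  {x | ∃ l : List V, IsPathOn A s t l ∧ x = pathVec l}

/-- `X^flow`: the set of nonnegative `s`-`t`-flows of value 1 in the digraph with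
arc set `A` (flows vanish outside `A`, and every node has the appropriate excess). -/
def XFlow {V : Type*} [Fintype V] [DecidableEq V] (A : Set (V × V)) (s t : V) :
    Set ((V × V) → ℝ) :=
  {x | (∀ p, 0 ≤ x p) ∧ (∀ p, p ∉ A → x p = 0) ∧
    ∀ v, (∑ w, x (v, w)) - (∑ u, x (u, v)) =
      if v = s then 1 else if v = t then -1 else 0}

/-- `S` is identifying for `X`: any two distinct members of `X` differ on some arc in `S`. -/
def Identifying {V : Type*} (X : Set ((V × V) → ℝ)) (S : Set (V × V)) : Prop :=
  ∀ x ∈ X, ∀ y ∈ X, x ≠ y → ∃ e ∈ S, x e ≠ y e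

/-- The digraph with arc set `A` is acyclic: it has no directed cycle. -/
def IsAcyclicDigraph {V : Type*} (A : Set (V × V)) : Prop :=
  ¬ ∃ (a : V) (l : List V), (a :: l).Nodup ∧
      ∀ p ∈ arcsOf (a :: (l ++ [a])), p ∈ A

section Claim3Aux
variable {V : Type*}

lemma arcsOf_cons_cons (a b : V) (l : List V) :
    arcsOf (a :: b :: l) = (a, b) :: arcsOf (b :: l) := rfl

lemma arcsOf_single (a : V) : arcsOf [a] = [] := rfl

lemma arcsOf_append' : ∀ (l : List V) (a : V) (r : List V),
    arcsOf (l ++ a :: r) = arcsOf (l ++ [a]) ++ arcsOf (a :: r)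
  | [], a, r => by simp [arcsOf_single]
  | [x], a, r => by simp [arcsOf_cons_cons, arcsOf_single]
  | x :: y :: ys, a, r => by
    have ih := arcsOf_append' (y :: ys) a r
    simp only [List.cons_append, arcsOf_cons_cons] at *
    rw [ih]

lemma chain'_of_arcs {R : V → V → Prop} :
    ∀ {l : List V}, (∀ p ∈ arcsOf l, R p.1 p.2) → List.Chain' R l
  | [], _ => List.isChain_nil
  | [x], _ => List.isChain_singleton x
  | x :: y :: ys, h => by
    change List.IsChain R (x :: y :: ys)
    rw [List.isChain_cons_cons]
    refine ⟨h (x, y) (by rw [arcsOf_cons_cons]; exact List.mem_cons_self), ?_⟩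
    exact chain'_of_arcs fun p hp => h p (by rw [arcsOf_cons_cons]; exact List.mem_cons_of_mem _ hp)

lemma mem_arcsOf_cons {p : V × V} {l : List V} (a : V) (h : p ∈ arcsOf l) :
    p ∈ arcsOf (a :: l) := by
  cases l with
  | nil => simp [arcsOf] at h
  | cons b r => rw [arcsOf_cons_cons]; exact List.mem_cons_of_mem _ h

lemma mem_arcsOf_append_right {p : V × V} {l2 : List V} :
    ∀ (l1 : List V), p ∈ arcsOf l2 → p ∈ arcsOf (l1 ++ l2)
  | [], h => h
  | x :: xs, h => mem_arcsOf_cons x (mem_arcsOf_append_right xs h)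

lemma arc_split {p : V × V} : ∀ {l : List V}, p ∈ arcsOf l →
    ∃ l1 l2, l = l1 ++ p.1 :: p.2 :: l2
  | [], h => by simp [arcsOf] at h
  | [x], h => by simp [arcsOf] at h
  | x :: y :: ys, h => by
    rw [arcsOf_cons_cons] at h
    rcases List.mem_cons.1 h with h | h
    · exact ⟨[], ys, by simp [h]⟩
    · obtain ⟨l1, l2, hl⟩ := arc_split h
      exact ⟨x :: l1, l2, by simp [hl]⟩

lemma or_getLast (l : List V) (x : Option V) (hne : l ≠ []) :
    l.getLast?.or x = l.getLast? := by
  cases h : l.getLast? with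
  | none => exact absurd (List.getLast?_eq_none_iff.1 h) hne
  | some y => simp

lemma glue_spec {l1 l2 : List V} {m : V} (h1 : l1.getLast? = some m) (h2 : l2.head? = some m) :
    arcsOf (l1 ++ l2.tail) = arcsOf l1 ++ arcsOf l2 ∧
      (l1 ++ l2.tail).head? = l1.head? ∧ (l1 ++ l2.tail).getLast? = l2.getLast? := by
  obtain ⟨tl, rfl⟩ : ∃ tl, l2 = m :: tl := by
    cases l2 with
    | nil => simp at h2
    | cons a b => exact ⟨b, by simpa using congrArg (List.cons · b) (by simpa using h2 : a = m)⟩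
  obtain ⟨l0, rfl⟩ := List.getLast?_eq_some_iff.1 h1
  cases tl with
  | nil => simp [arcsOf_single, h1]
  | cons b r =>
    refine ⟨?_, ?_, ?_⟩
    · have := arcsOf_append' l0 m (b :: r)
      simpa using this
    · simp
    · rw [List.getLast?_append]
      exact or_getLast _ _ (by simp)

lemma join_spec {l1 l2 : List V} {a b : V} (h1 : l1.getLast? = some a) (h2 : l2.head? = some b) :
    arcsOf (l1 ++ l2) = arcsOf l1 ++ (a, b) :: arcsOf l2 ∧
      (l1 ++ l2).head? = l1.head? ∧ (l1 ++ l2).getLast? = l2.getLast? := by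
  obtain ⟨tl, rfl⟩ : ∃ tl, l2 = b :: tl := by
    cases l2 with
    | nil => simp at h2
    | cons x y => exact ⟨y, by simpa using congrArg (List.cons · y) (by simpa using h2 : x = b)⟩
  obtain ⟨l0, rfl⟩ := List.getLast?_eq_some_iff.1 h1
  refine ⟨?_, by simp, by rw [List.getLast?_append]; exact or_getLast _ _ (by simp)⟩
  have := arcsOf_append' l0 a (b :: tl)
  rw [arcsOf_cons_cons] at this
  simpa using this

lemma getLast?_suffix {l1 l2 : List V} {t : V} (h : (l1 ++ l2).getLast? = some t)
    (hne : l2 ≠ []) : l2.getLast? = some t := by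
  rw [List.getLast?_append] at h
  cases h2 : l2.getLast? with
  | none => exact absurd (List.getLast?_eq_none_iff.1 h2) hne
  | some y => rw [h2] at h; simpa using h

end Claim3Aux

/-- Setup of Claim 3: `G` is a DAG with arc set `A` in which every arc lies on an
`s`-`t`-path, `ψ` is a topological ordering, `S ⊆ A` is identifying for the
`s`-`t`-paths, `T ⊆ A` is a (spanning) arborescence rooted at `s` (unique `T`-path from
`s` to every node), `S' = A \ T`, `V_s = {s} ∪ {heads of arcs of S ∩ T}`,
`V_t = {t} ∪ {tails of arcs of S}`, and for `e = (v, w) ∈ S'` the node `vs e` is the last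
element of `V_s` on the unique `s`-`v`-path in `T`, while `vt e` is the `ψ`-minimal node
of `V_t` reachable from `w` in `(V, A \ S)`.  Conclusion: for every `e ∈ S' \ S` one has
(1) `ψ (vs e) ≤ ψ (vt e)`, and (2) there is no `vs e`-`vt e`-path using only arcs
of `T \ S`. -/
theorem stmt13 {V : Type*} [Fintype V] [DecidableEq V] (A : Set (V × V)) (s t : V)
    (hacyc : IsAcyclicDigraph A)
    (hcov : ∀ e ∈ A, ∃ l, IsPathOn A s t l ∧ e ∈ arcsOf l)
    (ψ : V ≃ Fin (Fintype.card V))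
    (hψ : ∀ e ∈ A, (ψ e.1 : ℕ) ≤ (ψ e.2 : ℕ))
    (S : Set (V × V)) (hS : S ⊆ A) (hid : Identifying (XPath A s t) S)
    (T : Set (V × V)) (hT : T ⊆ A)
    (harb : ∀ v : V, ∃! l : List V, IsPathOn T s v l)
    (vs vt : V × V → V)
    (hvs : ∀ e ∈ A \ T, ∀ l : List V, IsPathOn T s e.1 l →
      vs e ∈ insert s {v | ∃ u, (u, v) ∈ S ∩ T} ∧ vs e ∈ l ∧
        ∀ u ∈ l, u ∈ insert s {v | ∃ u', (u', v) ∈ S ∩ T} →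
          l.idxOf u ≤ l.idxOf (vs e))
    (hvt : ∀ e ∈ A \ T,
      vt e ∈ insert t {v | ∃ w, (v, w) ∈ S} ∧
      (∃ l, IsPathOn (A \ S) e.2 (vt e) l) ∧
      ∀ u ∈ insert t {v | ∃ w, (v, w) ∈ S},
        (∃ l, IsPathOn (A \ S) e.2 u l) → (ψ (vt e) : ℕ) ≤ (ψ u : ℕ)) :
    ∀ e ∈ (A \ T) \ S,
      (ψ (vs e) : ℕ) ≤ (ψ (vt e) : ℕ) ∧
      ¬ ∃ l, IsPathOn (T \ S) (vs e) (vt e) l := by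
  classical
  -- no self-loops, and strict increase of ψ along arcs
  have hloop : ∀ a : V, (a, a) ∉ A := by
    intro a ha
    exact hacyc ⟨a, [], by simp, by
      intro p hp
      have : p = (a, a) := by simpa [arcsOf] using hp
      rw [this]; exact ha⟩
  have hstrict : ∀ p ∈ A, (ψ p.1 : ℕ) < (ψ p.2 : ℕ) := by
    rintro ⟨a, b⟩ hab
    rcases eq_or_ne a b with rfl | hne
    · exact absurd hab (hloop a)
    · rcases lt_or_eq_of_le (hψ _ hab) with h | h
      · exact h
      · exact absurd (ψ.injective (Fin.ext h)) hne
  have hpair : ∀ l : List V, (∀ p ∈ arcsOf l, p ∈ A) →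
      List.Pairwise (fun a b => (ψ a : ℕ) < (ψ b : ℕ)) l := by
    intro l hl
    haveI : IsTrans V (fun a b => (ψ a : ℕ) < (ψ b : ℕ)) :=
      ⟨fun a b c hab hbc => lt_trans hab hbc⟩
    exact List.isChain_iff_pairwise.1 (chain'_of_arcs fun p hp => hstrict p (hl p hp))
  have hnd : ∀ l : List V, (∀ p ∈ arcsOf l, p ∈ A) → l.Nodup := by
    intro l hl
    exact (hpair l hl).imp fun {a b} h => by
      intro he; subst he; exact lt_irrefl _ h
  have head_le : ∀ (l : List V) (u a : V), l.head? = some u → a ∈ l →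
      (∀ p ∈ arcsOf l, p ∈ A) → (ψ u : ℕ) ≤ (ψ a : ℕ) := by
    intro l u a hh ha hl
    obtain ⟨tl, rfl⟩ : ∃ tl, l = u :: tl := by
      cases l with
      | nil => simp at hh
      | cons x y => exact ⟨y, by simpa using congrArg (List.cons · y) (by simpa using hh : x = u)⟩
    rcases List.mem_cons.1 ha with rfl | ha
    · exact le_refl _
    · exact (List.rel_of_pairwise_cons (hpair _ hl) ha).le
  have le_getLast : ∀ (l : List V) (z a : V), l.getLast? = some z → a ∈ l →
      (∀ p ∈ arcsOf l, p ∈ A) → (ψ a : ℕ) ≤ (ψ z : ℕ) := by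
    intro l z a hh ha hl
    obtain ⟨l0, rfl⟩ := List.getLast?_eq_some_iff.1 hh
    rcases List.mem_append.1 ha with ha | ha
    · exact ((List.pairwise_append.1 (hpair _ hl)).2.2 a ha z (List.mem_singleton_self _)).le
    · rw [List.mem_singleton.1 ha]
  intro e he
  obtain ⟨heAT, heS⟩ := he
  have heA : e ∈ A := heAT.1
  have heT : e ∉ T := heAT.2
  obtain ⟨P, hP, -⟩ := harb e.1
  obtain ⟨hvsVs, hvsP, hvsMax⟩ := hvs e heAT P hP
  obtain ⟨hvtVt, ⟨Q, hQnd, hQh, hQl, hQA⟩, -⟩ := hvt e heAT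
  obtain ⟨Pa', P2', rfl⟩ := List.append_of_mem hvsP
  obtain ⟨hPnd, hPh, hPl, hPA⟩ := hP
  -- paths' arcs lie in A
  have hPA' : ∀ p ∈ arcsOf (Pa' ++ vs e :: P2'), p ∈ A := fun p hp => hT (hPA p hp)
  have hQA' : ∀ p ∈ arcsOf Q, p ∈ A := fun p hp => (hQA p hp).1
  -- part (1)
  have hvt_mem_Q : vt e ∈ Q := by
    obtain ⟨l0, rfl⟩ := List.getLast?_eq_some_iff.1 hQl
    exact List.mem_append_right _ (List.mem_singleton_self _)
  have h1a : (ψ (vs e) : ℕ) ≤ (ψ e.1 : ℕ) :=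
    le_getLast _ _ _ hPl hvsP hPA'
  have h1b : (ψ e.1 : ℕ) < (ψ e.2 : ℕ) := hstrict e heA
  have h1c : (ψ e.2 : ℕ) ≤ (ψ (vt e) : ℕ) :=
    head_le _ _ _ hQh hvt_mem_Q hQA'
  refine ⟨by omega, ?_⟩
  rintro ⟨R, hRnd, hRh, hRl, hRA⟩
  -- the path D from (vt e) to t in A
  obtain ⟨D, hDnd, hDh, hDl, hDA⟩ : ∃ D, IsPathOn A (vt e) t D := by
    rcases hvtVt with h | ⟨x, hx⟩
    · refine ⟨[t], by simp, by simp [h], rfl, by intro p hp; simp [arcsOf] at hp⟩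
    · obtain ⟨L, ⟨hLnd, hLh, hLl, hLA⟩, hmem⟩ := hcov (vt e, x) (hS hx)
      obtain ⟨L1, L2, rfl⟩ := arc_split hmem
      refine ⟨vt e :: x :: L2, ?_, rfl, ?_, ?_⟩
      · exact hLnd.sublist (List.sublist_append_right L1 _)
      · exact getLast?_suffix hLl (by simp)
      · exact fun p hp => hLA p (mem_arcsOf_append_right L1 hp)
  -- decompositions of arc lists
  have harcP : arcsOf (Pa' ++ vs e :: P2')
      = arcsOf (Pa' ++ [vs e]) ++ arcsOf (vs e :: P2') := arcsOf_append' Pa' (vs e) P2'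
  have hglueQD := glue_spec hQl hDh
  have hheadQD : (Q ++ D.tail).head? = some e.2 := by rw [hglueQD.2.1]; exact hQh
  have hjoin := join_spec hPl hheadQD
  have hglueRD := glue_spec hRl hDh
  have hheadRD : (R ++ D.tail).head? = some (vs e) := by rw [hglueRD.2.1]; exact hRh
  have hPalast : (Pa' ++ [vs e]).getLast? = some (vs e) := List.getLast?_concat
  have hglue2 := glue_spec hPalast hheadRD
  set X1 : List V := (Pa' ++ vs e :: P2') ++ (Q ++ D.tail) with hX1def
  set X2 : List V := (Pa' ++ [vs e]) ++ (R ++ D.tail).tail with hX2def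
  have hX1arcs : arcsOf X1
      = arcsOf (Pa' ++ vs e :: P2') ++ (e.1, e.2) :: (arcsOf Q ++ arcsOf D) := by
    rw [hX1def, hjoin.1, hglueQD.1]
  have hX2arcs : arcsOf X2
      = arcsOf (Pa' ++ [vs e]) ++ (arcsOf R ++ arcsOf D) := by
    rw [hX2def, hglue2.1, hglueRD.1]
  -- arcs of X1, X2 lie in A
  have hX1A : ∀ p ∈ arcsOf X1, p ∈ A := by
    intro p hp
    rw [hX1arcs] at hp
    rcases List.mem_append.1 hp with hp | hp
    · exact hPA' p hp
    · rcases List.mem_cons.1 hp with rfl | hp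
      · exact heA
      · rcases List.mem_append.1 hp with hp | hp
        · exact hQA' p hp
        · exact hDA p hp
  have hPaT : ∀ p ∈ arcsOf (Pa' ++ [vs e]), p ∈ T := by
    intro p hp
    exact hPA p (by rw [harcP]; exact List.mem_append_left _ hp)
  have hX2A : ∀ p ∈ arcsOf X2, p ∈ A := by
    intro p hp
    rw [hX2arcs] at hp
    rcases List.mem_append.1 hp with hp | hp
    · exact hT (hPaT p hp)
    · rcases List.mem_append.1 hp with hp | hp
      · exact hT (hRA p hp).1
      · exact hDA p hp
  -- X1, X2 are s-t-paths
  have hPahead : (Pa' ++ [vs e]).head? = some s := by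
    cases Pa' with
    | nil => simpa using hPh
    | cons a l => simpa using hPh
  have hX1path : IsPathOn A s t X1 := by
    refine ⟨hnd _ hX1A, ?_, ?_, hX1A⟩
    · rw [hX1def, hjoin.2.1]; exact hPh
    · rw [hX1def, hjoin.2.2, hglueQD.2.2]; exact hDl
  have hX2path : IsPathOn A s t X2 := by
    refine ⟨hnd _ hX2A, ?_, ?_, hX2A⟩
    · rw [hX2def, hglue2.2.1]; exact hPahead
    · rw [hX2def, hglue2.2.2, hglueRD.2.2]; exact hDl
  -- arcs of the middle part of P carry no S-arc
  have hPbS : ∀ p ∈ arcsOf (vs e :: P2'), p ∉ S := by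
    rintro ⟨u, x⟩ hp hpS
    have hpT : (u, x) ∈ T :=
      hPA _ (by rw [harcP]; exact List.mem_append_right _ hp)
    have hx2 : x ∈ P2' := (List.of_mem_zip hp).2
    have hdisj := List.disjoint_of_nodup_append hPnd
    have hvsnot : vs e ∉ Pa' := fun h => hdisj h List.mem_cons_self
    have hxnot : x ∉ Pa' := fun h => hdisj h (List.mem_cons_of_mem _ hx2)
    have hxne : x ≠ vs e := by
      intro h
      have := (List.nodup_cons.1 (hPnd.of_append_right)).1
      exact this (h ▸ hx2)
    have hidx1 : List.idxOf (vs e) (Pa' ++ vs e :: P2') = Pa'.length := by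
      rw [List.idxOf_append_of_notMem hvsnot, List.idxOf_cons_self]
      omega
    have hidx2 : List.idxOf x (Pa' ++ vs e :: P2')
        = Pa'.length + (List.idxOf x P2').succ := by
      rw [List.idxOf_append_of_notMem hxnot, List.idxOf_cons_ne _ (Ne.symm hxne)]
    have := hvsMax x (List.mem_append_right _ (List.mem_cons_of_mem _ hx2))
      (Set.mem_insert_iff.2 (Or.inr ⟨u, hpS, hpT⟩))
    rw [hidx1, hidx2] at this
    omega
  -- e is an arc of X1 but not of X2
  have heX1 : e ∈ arcsOf X1 := by
    rw [hX1arcs]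
    exact List.mem_append_right _ (by simp)
  have heX2 : e ∉ arcsOf X2 := by
    rw [hX2arcs]
    intro hp
    rcases List.mem_append.1 hp with hp | hp
    · exact heT (hPaT e hp)
    · rcases List.mem_append.1 hp with hp | hp
      · exact heT (hRA e hp).1
      · have he1D : e.1 ∈ D := (List.of_mem_zip (a := e.1) (b := e.2) hp).1
        have := head_le D (vt e) e.1 hDh he1D hDA
        omega
  -- X1 and X2 agree on S
  have hiff : ∀ p ∈ S, (p ∈ arcsOf X1 ↔ p ∈ arcsOf X2) := by
    intro p hpS
    rw [hX1arcs, hX2arcs, harcP]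
    simp only [List.mem_append, List.mem_cons]
    constructor
    · rintro ((hp | hp) | hp | hp | hp)
      · exact Or.inl hp
      · exact absurd hpS (hPbS p hp)
      · exact absurd hpS (by rw [hp]; simpa using heS)
      · exact absurd (hQA p hp).2 (fun h => h hpS)
      · exact Or.inr (Or.inr hp)
    · rintro (hp | hp | hp)
      · exact Or.inl (Or.inl hp)
      · exact absurd hpS (hRA p hp).2
      · exact Or.inr (Or.inr (Or.inr hp))
  -- contradiction with identifiability
  have hneq : pathVec X1 ≠ pathVec X2 := by
    intro h
    have := congrFun h e
    simp [pathVec, heX1, heX2] at this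
  obtain ⟨p, hpS, hpne⟩ := hid (pathVec X1) ⟨X1, hX1path, rfl⟩ (pathVec X2) ⟨X2, hX2path, rfl⟩ hneq
  exact hpne (by simp only [pathVec]; rw [if_congr (hiff p hpS) rfl rfl])
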